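/- Fix integers l ≥ 2 and nonnegative integers n₀, …, n_l, and consider the polynomial ring ℂ[t_{s,i} : 0 ≤ s ≤ l, 1 ≤ i ≤ n_s]. Let V be the set of polynomials f that are invariant under all permutations of the variables t_{s,1}, …, t_{s,n_s} within each block s, and such that for all 0 ≤ s < r ≤ l with r − s ≥ 2, all 1 ≤ i ≤ n_s, 1 ≤ j ≤ n_r, and all 0 ≤ w ≤ r − s − 2, the polynomial obtained from ∂^w f/∂t_{s,i}^w by substituting t_{r,j} := t_{s,i} is zero. Then V = Δ · ℂ[t]^{S_{n₀} × … × S_{n_l}}, where Δ = Π_{0 ≤ s < r ≤ l, r−s ≥ 2} Π_{1 ≤ i ≤ n_s, 1 ≤ j ≤ n_r} (t_{s,i} − t_{r,j})^{r−s−1} and ℂ[t]^{S_{n₀} × … × S_{n_l}} is the space of polynomials invariant under permutations of variables within each block. -/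

import Mathlib

set_option maxHeartbeats 1600000



open scoped BigOperators
open MvPolynomial

section Aux

variable {V : Type*} [DecidableEq V]

/-- The substitution `y ↦ x`. -/
noncomputable def Esub (x y : V) : MvPolynomial V ℂ →ₐ[ℂ] MvPolynomial V ℂ :=
  aeval (fun v => if v = y then X x else X v)

lemma Esub_X (x y v : V) : Esub x y (X v) = if v = y then X x else X v := by
  simp [Esub]

lemma Esub_p (x y : V) : Esub x y (X x - X y) = 0 := by
  rcases eq_or_ne x y with h | h <;> simp [map_sub, Esub_X, h]

lemma dvd_of_Esub_eq_zero {x y : V} (hxy : x ≠ y) {f : MvPolynomial V ℂ}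
    (hf : Esub x y f = 0) : (X x - X y) ∣ f := by
  set I : Ideal (MvPolynomial V ℂ) := Ideal.span {X x - X y} with hI
  have key : (Ideal.Quotient.mkₐ ℂ I).comp (Esub x y) = Ideal.Quotient.mkₐ ℂ I := by
    apply MvPolynomial.algHom_ext
    intro v
    simp only [AlgHom.comp_apply, Esub_X]
    split_ifs with h
    · subst h
      have : (X x - X v : MvPolynomial V ℂ) ∈ I := Ideal.subset_span rfl
      have := (Ideal.Quotient.eq (I := I)).2 this
      simpa using this
    · rfl
  have := congrFun (congrArg (DFunLike.coe) key) f
  rw [AlgHom.comp_apply, hf, map_zero] at this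
  rw [← Ideal.mem_span_singleton]
  exact (Ideal.Quotient.eq_zero_iff_mem).1 this.symm

lemma Esub_eq_zero_of_dvd {x y : V} {f : MvPolynomial V ℂ}
    (h : (X x - X y) ∣ f) : Esub x y f = 0 := by
  obtain ⟨g, rfl⟩ := h
  rw [map_mul, Esub_p, zero_mul]

lemma pderiv_pow_mul {x y : V} (hxy : x ≠ y) (k : ℕ) (h : MvPolynomial V ℂ) :
    pderiv x ((X x - X y)^(k+1) * h)
      = (X x - X y)^k * (((k:ℕ)+1 : MvPolynomial V ℂ) * h + (X x - X y) * pderiv x h) := by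
  have hp : pderiv x (X x - X y : MvPolynomial V ℂ) = 1 := by
    rw [map_sub, pderiv_X_self, pderiv_X_of_ne (Ne.symm hxy), sub_zero]
  rw [pderiv_mul, pderiv_pow, hp]
  push_cast
  ring

/-- Iterated derivative of `p^m * h`. -/
lemma iter_pderiv_pow_mul {x y : V} (hxy : x ≠ y) (m : ℕ) (h : MvPolynomial V ℂ) :
    ∀ w ≤ m, ∃ c : ℕ, c ≠ 0 ∧ ∃ h' : MvPolynomial V ℂ,
      (⇑(pderiv x))^[w] ((X x - X y)^m * h) = (X x - X y)^(m-w) * h' ∧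
        Esub x y h' = (c : MvPolynomial V ℂ) * Esub x y h := by
  intro w hw
  induction w with
  | zero => exact ⟨1, one_ne_zero, h, by simp⟩
  | succ w ih =>
    obtain ⟨c, hc, h', hh', hE⟩ := ih (Nat.le_of_succ_le hw)
    obtain ⟨k, hk⟩ : ∃ k, m - w = k + 1 := ⟨m - w - 1, by omega⟩
    have hk2 : m - (w + 1) = k := by omega
    refine ⟨(k+1) * c, by positivity,
      (((k:ℕ)+1 : MvPolynomial V ℂ) * h' + (X x - X y) * pderiv x h'), ?_, ?_⟩
    · rw [Function.iterate_succ_apply', hh', hk, pderiv_pow_mul hxy, hk2]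
    · rw [map_add, map_mul, map_mul, Esub_p, zero_mul, add_zero, hE]
      have : Esub x y (((k:ℕ)+1 : MvPolynomial V ℂ)) = ((k:ℕ)+1 : MvPolynomial V ℂ) := by
        rw [show ((k:ℕ)+1 : MvPolynomial V ℂ) = ((k+1 : ℕ) : MvPolynomial V ℂ) by push_cast; ring,
          map_natCast]
      rw [this]
      push_cast
      ring

/-- Key lemma: vanishing of the first `m` derivatives along `y = x` is equivalent to
divisibility by `(X x - X y)^m`. -/
lemma pow_dvd_iff_vanishing {x y : V} (hxy : x ≠ y) (m : ℕ) (f : MvPolynomial V ℂ) :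
    (X x - X y)^m ∣ f ↔ ∀ w < m, Esub x y ((⇑(pderiv x))^[w] f) = 0 := by
  induction m generalizing f with
  | zero => simp
  | succ m ih =>
    constructor
    · rintro ⟨h, rfl⟩ w hw
      obtain ⟨c, hc, h', hh', hE⟩ := iter_pderiv_pow_mul hxy (m+1) h w (by omega)
      rw [hh', map_mul]
      have : (m + 1 - w) = (m - w) + 1 := by omega
      rw [this, pow_succ, map_mul, Esub_p, mul_zero, zero_mul]
    · intro hvan
      obtain ⟨h, rfl⟩ : (X x - X y)^m ∣ f :=
        (ih f).2 (fun w hw => hvan w (by omega))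
      obtain ⟨c, hc, h', hh', hE⟩ := iter_pderiv_pow_mul hxy m h m le_rfl
      have h0 := hvan m (by omega)
      rw [hh'] at h0
      simp only [Nat.sub_self, pow_zero, one_mul] at h0
      rw [h0] at hE
      have hEh : Esub x y h = 0 := by
        have hcC : ((c:ℕ) : MvPolynomial V ℂ) ≠ 0 := by
          exact_mod_cast Nat.cast_ne_zero.2 hc
        rcases mul_eq_zero.1 hE.symm with h1 | h1
        · exact absurd h1 hcC
        · exact h1
      obtain ⟨g, rfl⟩ := dvd_of_Esub_eq_zero hxy hEh
      exact ⟨g, by ring⟩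

/-- `X x - X y` is prime when `x ≠ y`. -/
lemma prime_X_sub_X {x y : V} (hxy : x ≠ y) : Prime (X x - X y : MvPolynomial V ℂ) := by
  -- transfer primality through an algebra automorphism sending `X x` to `X x - X y`
  let φ : MvPolynomial V ℂ →ₐ[ℂ] MvPolynomial V ℂ :=
    aeval (fun v => if v = x then X x - X y else X v)
  let ψ : MvPolynomial V ℂ →ₐ[ℂ] MvPolynomial V ℂ :=
    aeval (fun v => if v = x then X x + X y else X v)
  have hφψ : φ.comp ψ = AlgHom.id ℂ _ := by
    apply MvPolynomial.algHom_ext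
    intro v
    simp only [AlgHom.comp_apply, AlgHom.id_apply, aeval_X, φ, ψ]
    split_ifs with h
    · subst h
      rw [map_add, aeval_X, aeval_X, if_pos rfl, if_neg (Ne.symm hxy)]
      ring
    · rw [aeval_X, if_neg h]
  have hψφ : ψ.comp φ = AlgHom.id ℂ _ := by
    apply MvPolynomial.algHom_ext
    intro v
    simp only [AlgHom.comp_apply, AlgHom.id_apply, aeval_X, φ, ψ]
    split_ifs with h
    · subst h
      rw [map_sub, aeval_X, aeval_X, if_pos rfl, if_neg (Ne.symm hxy)]
      ring
    · rw [aeval_X, if_neg h]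
  let e : MvPolynomial V ℂ ≃ₐ[ℂ] MvPolynomial V ℂ := AlgEquiv.ofAlgHom φ ψ hφψ hψφ
  have hX : Prime (X x : MvPolynomial V ℂ) := by
    let e2 : MvPolynomial V ℂ ≃ₐ[ℂ] Polynomial (MvPolynomial {v : V // v ≠ x} ℂ) :=
      (renameEquiv ℂ (Equiv.optionSubtypeNe x).symm).trans (optionEquivLeft ℂ _)
    have : e2 (X x) = Polynomial.X := by
      simp only [e2, AlgEquiv.trans_apply, renameEquiv_apply, rename_X,
        Equiv.optionSubtypeNe_symm_self, optionEquivLeft_X_none]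
    rw [← MulEquiv.prime_iff e2.toRingEquiv.toMulEquiv]
    show Prime (e2 (X x))
    rw [this]
    exact Polynomial.prime_X
  have : e (X x) = X x - X y := by
    simp only [e, AlgEquiv.ofAlgHom_apply]
    rw [show φ (X x) = _ from aeval_X _ x, if_pos rfl]
  rw [← this]
  exact (MulEquiv.prime_iff e.toRingEquiv.toMulEquiv).2 hX

lemma eq_of_X_sub_X_dvd {a b c d : V} (hab : a ≠ b)
    (h : (X c - X d) ∣ (X a - X b : MvPolynomial V ℂ)) :
    (a = c ∧ b = d) ∨ (a = d ∧ b = c) := by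
  have h0 := Esub_eq_zero_of_dvd h
  rw [map_sub, Esub_X, Esub_X] at h0
  have key : ∀ u v : V, (X u : MvPolynomial V ℂ) - X v = 0 → u = v := by
    intro u v huv
    exact MvPolynomial.X_injective (sub_eq_zero.1 huv)
  by_cases ha : a = d <;> by_cases hb : b = d
  · exact absurd (ha.trans hb.symm) hab
  · rw [if_pos ha, if_neg hb] at h0
    exact Or.inr ⟨ha, (key _ _ h0).symm⟩
  · rw [if_neg ha, if_pos hb] at h0
    exact Or.inl ⟨key _ _ h0, hb⟩
  · rw [if_neg ha, if_neg hb] at h0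
    exact absurd (key _ _ h0) hab

lemma prod_pow_dvd {α : Type*} [CommMonoidWithZero α] [IsCancelMulZero α] {ι : Type*} [DecidableEq ι]
    (s : Finset ι) (p : ι → α) (k : ι → ℕ) (hp : ∀ i ∈ s, Prime (p i))
    (hpa : ∀ i ∈ s, ∀ j ∈ s, i ≠ j → ¬ Associated (p i) (p j)) :
    ∀ f : α, (∀ i ∈ s, p i ^ k i ∣ f) → (∏ i ∈ s, p i ^ k i) ∣ f := by
  induction s using Finset.induction_on with
  | empty => intro f _; simp
  | @insert a s' ha ih =>
    intro f hdvd
    obtain ⟨g, rfl⟩ := hdvd a (Finset.mem_insert_self a s')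
    rw [Finset.prod_insert ha]
    have hg : ∀ i ∈ s', p i ^ k i ∣ g := by
      intro i hi
      have hia : i ≠ a := by rintro rfl; exact ha hi
      have hpi := hp i (Finset.mem_insert_of_mem hi)
      have hnd : ¬ p i ∣ p a ^ k a := by
        intro hd
        exact hpa i (Finset.mem_insert_of_mem hi) a (Finset.mem_insert_self a s') hia
          (hpi.associated_of_dvd (hp a (Finset.mem_insert_self a s')) (hpi.dvd_of_dvd_pow hd))
      exact hpi.pow_dvd_of_dvd_mul_left (k i) hnd
        (hdvd i (Finset.mem_insert_of_mem hi))
    exact mul_dvd_mul_left _ (ih (fun i hi => hp i (Finset.mem_insert_of_mem hi))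
      (fun i hi j hj hij => hpa i (Finset.mem_insert_of_mem hi) j (Finset.mem_insert_of_mem hj) hij)
      g hg)

end Aux

/-- A polynomial in the variables `t_{s,i}` (`0 ≤ s ≤ l`, `1 ≤ i ≤ n_s`, modelled by
the sigma type `(s : Fin (l+1)) × Fin (n s)`) is blockwise symmetric if it is invariant
under all permutations of the variables within each block. -/
def BlockSymmetric {l : ℕ} (n : Fin (l + 1) → ℕ)
    (f : MvPolynomial ((s : Fin (l + 1)) × Fin (n s)) ℂ) : Prop :=
  ∀ σ : Equiv.Perm ((s : Fin (l + 1)) × Fin (n s)),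
    (∀ x, (σ x).1 = x.1) → MvPolynomial.rename ⇑σ f = f

/-- The polynomial `Δ = Π_{0 ≤ s < r ≤ l, r-s ≥ 2} Π_{i,j} (t_{s,i} - t_{r,j})^{r-s-1}`. -/
noncomputable def DeltaPoly {l : ℕ} (n : Fin (l + 1) → ℕ) :
    MvPolynomial ((s : Fin (l + 1)) × Fin (n s)) ℂ :=
  ∏ s : Fin (l + 1), ∏ r : Fin (l + 1),
    if (s : ℕ) + 2 ≤ (r : ℕ) then
      ∏ i : Fin (n s), ∏ j : Fin (n r),
        (X (⟨s, i⟩ : (s : Fin (l + 1)) × Fin (n s)) - X ⟨r, j⟩) ^ ((r : ℕ) - (s : ℕ) - 1)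
    else 1


section DeltaFacts
variable {l : ℕ} (n : Fin (l + 1) → ℕ)

abbrev Vt := (s : Fin (l + 1)) × Fin (n s)

noncomputable def pairsSet : Finset (Vt n × Vt n) :=
  Finset.univ.filter (fun e => (e.1.1 : ℕ) + 2 ≤ (e.2.1 : ℕ))

lemma mem_pairsSet {e : Vt n × Vt n} :
    e ∈ pairsSet n ↔ (e.1.1 : ℕ) + 2 ≤ (e.2.1 : ℕ) := by
  simp [pairsSet]

lemma DeltaPoly_eq :
    DeltaPoly n = ∏ e ∈ pairsSet n,
      (X e.1 - X e.2) ^ ((e.2.1 : ℕ) - (e.1.1 : ℕ) - 1) := by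
  have h1 : ∀ F : Vt n → MvPolynomial (Vt n) ℂ,
      ∏ x : Vt n, F x = ∏ s : Fin (l+1), ∏ i : Fin (n s), F ⟨s, i⟩ := by
    intro F
    rw [← Finset.univ_sigma_univ, Finset.prod_sigma]
  have key : ∀ G : Vt n → Vt n → MvPolynomial (Vt n) ℂ,
      (∏ x : Vt n, ∏ y : Vt n, G x y)
        = ∏ s : Fin (l+1), ∏ r : Fin (l+1), ∏ i : Fin (n s), ∏ j : Fin (n r),
            G ⟨s, i⟩ ⟨r, j⟩ := by
    intro G
    rw [h1 (fun x => ∏ y : Vt n, G x y)]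
    refine Finset.prod_congr rfl fun s _ => ?_
    conv_lhs => rw [Finset.prod_comm]
    rw [h1 (fun y => ∏ i : Fin (n s), G ⟨s, i⟩ y)]
    exact Finset.prod_congr rfl fun r _ => Finset.prod_comm
  rw [pairsSet, Finset.prod_filter, Fintype.prod_prod_type, key]
  rw [DeltaPoly]
  refine Finset.prod_congr rfl fun s _ => Finset.prod_congr rfl fun r _ => ?_
  split_ifs with h
  · rfl
  · simp

lemma ne_of_fst_lt {a b : Vt n} (h : (a.1 : ℕ) < (b.1 : ℕ)) : a ≠ b := by
  intro hh
  rw [hh] at h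
  omega

lemma DeltaPoly_factor_prime {e : Vt n × Vt n} (he : e ∈ pairsSet n) :
    Prime (X e.1 - X e.2 : MvPolynomial (Vt n) ℂ) := by
  simp only [mem_pairsSet] at he
  exact prime_X_sub_X (ne_of_fst_lt n (a := e.1) (b := e.2) (by omega))

lemma DeltaPoly_factors_not_associated {e e' : Vt n × Vt n} (he : e ∈ pairsSet n)
    (he' : e' ∈ pairsSet n) (hne : e ≠ e') :
    ¬ Associated (X e.1 - X e.2 : MvPolynomial (Vt n) ℂ) (X e'.1 - X e'.2) := by
  simp only [mem_pairsSet] at he he'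
  intro hassoc
  have hd : (X e'.1 - X e'.2 : MvPolynomial (Vt n) ℂ) ∣ (X e.1 - X e.2) := hassoc.symm.dvd
  have hab : e.1 ≠ e.2 := ne_of_fst_lt n (a := e.1) (b := e.2) (by omega)
  rcases eq_of_X_sub_X_dvd hab hd with ⟨h1, h2⟩ | ⟨h1, h2⟩
  · refine hne ?_
    obtain ⟨a, b⟩ := e
    obtain ⟨c, d⟩ := e'
    simp only at h1 h2
    rw [h1, h2]
  · have hA : (e.1.1 : ℕ) = (e'.2.1 : ℕ) := by rw [h1]
    have hB : (e.2.1 : ℕ) = (e'.1.1 : ℕ) := by rw [h2]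
    omega

lemma DeltaPoly_rename (σ : Equiv.Perm (Vt n)) (hσ : ∀ x, (σ x).1 = x.1) :
    rename ⇑σ (DeltaPoly n) = DeltaPoly n := by
  rw [DeltaPoly_eq, map_prod]
  simp only [map_pow, map_sub, rename_X]
  refine Finset.prod_nbij' (fun e => (σ e.1, σ e.2)) (fun e => (σ⁻¹ e.1, σ⁻¹ e.2))
    ?_ ?_ ?_ ?_ ?_
  · intro e he
    simp only [pairsSet, Finset.mem_filter, Finset.mem_univ, true_and, hσ] at he ⊢
    exact he
  · intro e he
    have hσ' : ∀ x : Vt n, ((σ⁻¹ x).1) = x.1 := by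
      intro x
      conv_rhs => rw [← (by simp : σ (σ⁻¹ x) = x)]
      rw [hσ]
    simp only [pairsSet, Finset.mem_filter, Finset.mem_univ, true_and, hσ'] at he ⊢
    exact he
  · intro e _; simp
  · intro e _; simp
  · intro e _
    simp [hσ]

lemma DeltaPoly_ne_zero : DeltaPoly n ≠ 0 := by
  rw [DeltaPoly_eq]
  refine Finset.prod_ne_zero_iff.2 fun e he => pow_ne_zero _ ?_
  exact (DeltaPoly_factor_prime n he).ne_zero

lemma DeltaPoly_dvd {f : MvPolynomial (Vt n) ℂ}
    (h : ∀ e ∈ pairsSet n, (X e.1 - X e.2 : MvPolynomial (Vt n) ℂ)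
      ^ ((e.2.1 : ℕ) - (e.1.1 : ℕ) - 1) ∣ f) : DeltaPoly n ∣ f := by
  rw [DeltaPoly_eq]
  exact prod_pow_dvd _ _ _ (fun e he => DeltaPoly_factor_prime n he)
    (fun e he e' he' hne => DeltaPoly_factors_not_associated n he he' hne) f h

end DeltaFacts
/-- a polynomial `f` in the variables `t_{s,i}` is blockwise
symmetric and satisfies, for all `0 ≤ s < r ≤ l` with `r - s ≥ 2`, all `i, j` and all
`0 ≤ w ≤ r - s - 2`, the vanishing of `∂^w f/∂t_{s,i}^w` after the substitution
`t_{r,j} := t_{s,i}`, if and only if `f = Δ · g` for some blockwise symmetric `g`. -/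
theorem vanishing_iff_divisible_by_Delta (l : ℕ) (hl : 2 ≤ l) (n : Fin (l + 1) → ℕ)
    (f : MvPolynomial ((s : Fin (l + 1)) × Fin (n s)) ℂ) :
    (BlockSymmetric n f ∧
      ∀ (s r : Fin (l + 1)), (s : ℕ) + 2 ≤ (r : ℕ) →
        ∀ (i : Fin (n s)) (j : Fin (n r)) (w : ℕ), w + (s : ℕ) + 2 ≤ (r : ℕ) →
          MvPolynomial.aeval
              (fun v : (s' : Fin (l + 1)) × Fin (n s') =>
                if v = ⟨r, j⟩ then
                  (X (⟨s, i⟩ : (s' : Fin (l + 1)) × Fin (n s')) :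
                    MvPolynomial ((s' : Fin (l + 1)) × Fin (n s')) ℂ)
                else X v)
              ((⇑(MvPolynomial.pderiv (⟨s, i⟩ : (s' : Fin (l + 1)) × Fin (n s'))))^[w] f)
            = 0) ↔
      ∃ g, BlockSymmetric n g ∧ f = DeltaPoly n * g := by
  constructor
  · rintro ⟨hsym, hvan⟩
    have hdvd : ∀ e ∈ pairsSet n,
        (X e.1 - X e.2 : MvPolynomial (Vt n) ℂ) ^ ((e.2.1 : ℕ) - (e.1.1 : ℕ) - 1) ∣ f := by
      rintro ⟨⟨s, i⟩, ⟨r, j⟩⟩ he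
      simp only [mem_pairsSet] at he
      have hxy : (⟨s, i⟩ : Vt n) ≠ ⟨r, j⟩ :=
        ne_of_fst_lt n (a := ⟨s, i⟩) (b := ⟨r, j⟩) (by simpa using by omega)
      rw [pow_dvd_iff_vanishing hxy]
      intro w hw
      have := hvan s r he i j w (by simp only at he hw ⊢; omega)
      exact this
    obtain ⟨g, rfl⟩ := DeltaPoly_dvd n hdvd
    refine ⟨g, ?_, rfl⟩
    intro σ hσ
    have h1 := hsym σ hσ
    rw [map_mul, DeltaPoly_rename n σ hσ] at h1
    exact mul_left_cancel₀ (DeltaPoly_ne_zero n) h1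
  · rintro ⟨g, hg, rfl⟩
    constructor
    · intro σ hσ
      rw [map_mul, DeltaPoly_rename n σ hσ, hg σ hσ]
    · intro s r hsr i j w hw
      have hxy : (⟨s, i⟩ : Vt n) ≠ ⟨r, j⟩ :=
        ne_of_fst_lt n (a := ⟨s, i⟩) (b := ⟨r, j⟩) (by simpa using by omega)
      have hd : (X ⟨s, i⟩ - X ⟨r, j⟩ : MvPolynomial (Vt n) ℂ) ^ ((r : ℕ) - (s : ℕ) - 1)
          ∣ DeltaPoly n * g := by
        refine Dvd.dvd.mul_right ?_ g
        rw [DeltaPoly_eq]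
        have hmem : ((⟨s, i⟩, ⟨r, j⟩) : Vt n × Vt n) ∈ pairsSet n := by
          simp only [mem_pairsSet]
          exact hsr
        have key := Finset.dvd_prod_of_mem
          (fun e : Vt n × Vt n =>
            (X e.1 - X e.2 : MvPolynomial (Vt n) ℂ) ^ ((e.2.1 : ℕ) - (e.1.1 : ℕ) - 1)) hmem
        simpa using key
      have := (pow_dvd_iff_vanishing hxy _ _).1 hd w (by omega)
      exact this
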